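/- arXiv:2407.06220 — 3 statements merged into one kernel-verified Lean document; each statement's English description precedes it below -/
import Mathlib

section
/- For integers b ≥ 0 and l > 1, the number of plane trees with b+l edges having exactly b+1 odd-level vertices and exactly l even-level vertices, all of which are internal vertices, equals (1/(l−1))·C(l+b−1, l−2)·C(b+1, l); for l = 1 this number equals 1. -/
open scoped BigOperators

attribute [local instance] Classical.propDecidable

/-- Generalized binomial coefficient `C(n,m)`, equal to `0` when `m < 0` or `m > n`. -/
def binom (n m : ℤ) : ℤ :=
  if 0 ≤ m ∧ m ≤ n then ((n.toNat).choose m.toNat : ℤ) else 0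

/-! ### RNA secondary structures

An RNA secondary structure on `[n]` is recorded by its set of arcs, each arc being an
ordered pair `(i, j)` with `i < j`. -/

/-- `A` is the arc set of an RNA secondary structure of length `n`: every arc `(i,j)`
satisfies `1 ≤ i`, `i + 2 ≤ j` (i.e. `|i - j| ≥ 2`), `j ≤ n`, and any two arcs whose
intervals intersect are nested. -/
def IsSecStr (n : ℕ) (A : Finset (ℕ × ℕ)) : Prop :=
  (∀ p ∈ A, 1 ≤ p.1 ∧ p.1 + 2 ≤ p.2 ∧ p.2 ≤ n) ∧
  (∀ p ∈ A, ∀ q ∈ A,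
    ((Finset.Icc p.1 p.2) ∩ (Finset.Icc q.1 q.2)).Nonempty →
      Finset.Icc p.1 p.2 ⊆ Finset.Icc q.1 q.2 ∨ Finset.Icc q.1 q.2 ⊆ Finset.Icc p.1 p.2)

/-- The isolated bases of the structure with arc set `A` on `[n]`. -/
def isolatedBases (n : ℕ) (A : Finset (ℕ × ℕ)) : Finset ℕ :=
  (Finset.Icc 1 n).filter fun m => ∀ p ∈ A, p.1 ≠ m ∧ p.2 ≠ m

/-- The set of RNA secondary structures (given by their arc sets) on `[2b+k]` with `b` arcs
and `k` isolated bases; together with the auxiliary arc `(0, 2b+k+1)` these are the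
"RNA secondary structures with `b+1` base pairs and `k` isolated bases". -/
def SecStr (b k : ℕ) : Set (Finset (ℕ × ℕ)) :=
  {A | IsSecStr (2*b+k) A ∧ A.card = b ∧ (isolatedBases (2*b+k) A).card = k}

/-- The arcs of the structure together with the auxiliary arc `(0, 2b+k+1)`. -/
def aarcs (b k : ℕ) (A : Finset (ℕ × ℕ)) : Finset (ℕ × ℕ) :=
  insert (0, 2*b+k+1) A

/-- The left-ends of the (augmented) arcs. -/
def leftEnds (b k : ℕ) (A : Finset (ℕ × ℕ)) : Finset ℕ :=
  (aarcs b k A).image Prod.fst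

/-- `x` starts a maximal run of consecutive left-ends, i.e. a partial stack. -/
def isRunStart (b k : ℕ) (A : Finset (ℕ × ℕ)) (x : ℕ) : Prop :=
  ∀ y ∈ leftEnds b k A, y + 1 ≠ x

/-- The multiset of lengths of the partial stacks of the structure (with auxiliary arc). -/
noncomputable def partialStackLens (b k : ℕ) (A : Finset (ℕ × ℕ)) : Multiset ℕ :=
  ((leftEnds b k A).filter (isRunStart b k A)).val.map fun x =>
    ((Finset.range (b+2)).filter fun m => ∀ i ≤ m, x + i ∈ leftEnds b k A).card

/-- The number of partial stacks of the structure (with auxiliary arc). -/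
noncomputable def numPartialStacks (b k : ℕ) (A : Finset (ℕ × ℕ)) : ℕ :=
  Multiset.card (partialStackLens b k A)

/-- The arc `p` is the outermost arc of a helix. -/
def isHelixStart (b k : ℕ) (A : Finset (ℕ × ℕ)) (p : ℕ × ℕ) : Prop :=
  ∀ q ∈ aarcs b k A, ¬ (q.1 + 1 = p.1 ∧ q.2 = p.2 + 1)

/-- The multiset of sizes of the helices of the structure (with auxiliary arc). -/
noncomputable def helixSizes (b k : ℕ) (A : Finset (ℕ × ℕ)) : Multiset ℕ :=
  ((aarcs b k A).filter (isHelixStart b k A)).val.map fun p =>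
    ((Finset.range (b+2)).filter fun m => ∀ i ≤ m, (p.1 + i, p.2 - i) ∈ aarcs b k A).card

/-- The number of helices of the structure (with auxiliary arc). -/
noncomputable def numHelices (b k : ℕ) (A : Finset (ℕ × ℕ)) : ℕ :=
  Multiset.card (helixSizes b k A)

/-- The arc `e` (properly) covers the arc `p`. -/
def coversArc (e p : ℕ × ℕ) : Prop :=
  Finset.Icc p.1 p.2 ⊂ Finset.Icc e.1 e.2

/-- The size of the loop of the arc `e`: the number of elements (arcs and isolated bases)
directly covered by `e`. -/
noncomputable def loopSize (b k : ℕ) (A : Finset (ℕ × ℕ)) (e : ℕ × ℕ) : ℕ :=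
  ((aarcs b k A).filter fun p => coversArc e p ∧
      ∀ q ∈ aarcs b k A, coversArc e q → ¬ coversArc q p).card +
  ((isolatedBases (2*b+k) A).filter fun m => e.1 < m ∧ m < e.2 ∧
      ∀ q ∈ aarcs b k A, coversArc e q → ¬ (q.1 < m ∧ m < q.2)).card

/-- The multiset of loop sizes of the structure (one loop for each arc, incl. auxiliary). -/
noncomputable def loopSizes (b k : ℕ) (A : Finset (ℕ × ℕ)) : Multiset ℕ :=
  (aarcs b k A).val.map (loopSize b k A)

/-! ### Plane trees -/

/-- A plane tree: a root with a linearly ordered (possibly empty) list of subtrees. -/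
inductive PlaneTree : Type
  | node : List PlaneTree → PlaneTree

/-- Given the list of leaf-flags of the children of an even-level vertex (`true` = leaf),
the list of sizes of its E-blocks: each E-block is a maximal run of consecutive
(odd-level) leaves together with the immediately following (odd-level) internal vertex,
if any. -/
def blockSizesAux : ℕ → List Bool → List ℕ
  | acc, [] => if acc = 0 then [] else [acc]
  | acc, c :: rest => if c then blockSizesAux (acc + 1) rest else (acc + 1) :: blockSizesAux 0 rest

namespace PlaneTree

/-- Number of edges. -/
def numEdges : PlaneTree → ℕ
  | node ts => (ts.attach.map fun t => numEdges t.1 + 1).sum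
termination_by t => sizeOf t
decreasing_by have := List.sizeOf_lt_of_mem t.2; simp_wf; omega

/-- Whether the root has no children. -/
def isLeafB : PlaneTree → Bool
  | node ts => ts.isEmpty

/-- Number of vertices at even levels (`even = true`) resp. odd levels (`even = false`). -/
def countVert (even : Bool) : PlaneTree → ℕ
  | node ts => (if even then 1 else 0) + (ts.attach.map fun t => countVert (!even) t.1).sum
termination_by t => sizeOf t
decreasing_by have := List.sizeOf_lt_of_mem t.2; simp_wf; omega

/-- Number of internal vertices at even (resp. odd) levels. -/
noncomputable def countInternal (even : Bool) : PlaneTree → ℕ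
  | node ts => (if even ∧ ts ≠ [] then 1 else 0) +
      (ts.attach.map fun t => countInternal (!even) t.1).sum
termination_by t => sizeOf t
decreasing_by have := List.sizeOf_lt_of_mem t.2; simp_wf; omega

/-- The multiset of outdegrees of the internal vertices at even (resp. odd) levels. -/
noncomputable def internalOutdegs (even : Bool) : PlaneTree → Multiset ℕ
  | node ts => (if even ∧ ts ≠ [] then ({ts.length} : Multiset ℕ) else 0) +
      (ts.attach.map fun t => internalOutdegs (!even) t.1).sum
termination_by t => sizeOf t
decreasing_by have := List.sizeOf_lt_of_mem t.2; simp_wf; omega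

/-- The multiset of outdegrees of all vertices at even (resp. odd) levels. -/
def levelOutdegs (even : Bool) : PlaneTree → Multiset ℕ
  | node ts => (if even then ({ts.length} : Multiset ℕ) else 0) +
      (ts.attach.map fun t => levelOutdegs (!even) t.1).sum
termination_by t => sizeOf t
decreasing_by have := List.sizeOf_lt_of_mem t.2; simp_wf; omega

/-- The multiset of sizes of E-blocks determined by the vertices at even (resp. odd) levels. -/
def eBlockSizes (even : Bool) : PlaneTree → Multiset ℕ
  | node ts => (if even then (↑(blockSizesAux 0 (ts.map isLeafB)) : Multiset ℕ) else 0) +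
      (ts.attach.map fun t => eBlockSizes (!even) t.1).sum
termination_by t => sizeOf t
decreasing_by have := List.sizeOf_lt_of_mem t.2; simp_wf; omega

/-- The number of E-blocks of a plane tree. -/
def numEBlocks (T : PlaneTree) : ℕ :=
  Multiset.card (eBlockSizes true T)

/-- The number of internal vertices at even (resp. odd) levels whose rightmost child
is a leaf. -/
noncomputable def rightLeafInternalCount (even : Bool) : PlaneTree → ℕ
  | node ts => (if even ∧ (ts.getLast?.elim False fun t => isLeafB t = true) then 1 else 0) +
      (ts.attach.map fun t => rightLeafInternalCount (!even) t.1).sum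
termination_by t => sizeOf t
decreasing_by have := List.sizeOf_lt_of_mem t.2; simp_wf; omega

end PlaneTree

/-! ### Auxiliary development for the proof -/

namespace AuxPT

open PlaneTree

theorem countVert_node (e : Bool) (ts : List PlaneTree) :
    countVert e (node ts) = (if e then 1 else 0) + (ts.map (countVert (!e))).sum := by
  rw [countVert]
  congr 1
  rw [← List.attach_map_val (l := ts) (f := countVert (!e))]

theorem countInternal_node (e : Bool) (ts : List PlaneTree) :
    countInternal e (node ts) =
      (if e ∧ ts ≠ [] then 1 else 0) + (ts.map (countInternal (!e))).sum := by
  rw [countInternal]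
  congr 1
  rw [← List.attach_map_val (l := ts) (f := countInternal (!e))]

theorem numEdges_node (ts : List PlaneTree) :
    numEdges (node ts) = (ts.map (fun t => numEdges t + 1)).sum := by
  rw [numEdges]
  rw [← List.attach_map_val (l := ts) (f := fun t => numEdges t + 1)]

theorem cv_true_pos (ts : List PlaneTree) : 1 ≤ countVert true (node ts) := by
  rw [countVert_node]; simp

theorem cv_add : ∀ T : PlaneTree,
    countVert false T + countVert true T = numEdges T + 1
  | node ts => by
    rw [countVert_node, countVert_node, numEdges_node]
    simp only [Bool.not_false, Bool.not_true, if_true, if_false]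
    have h : ∀ t ∈ ts, countVert false t + countVert true t = numEdges t + 1 :=
      fun t ht => cv_add t
    induction ts with
    | nil => simp
    | cons a as ih =>
      have ha := h a (by simp)
      have := ih (fun t ht => h t (List.mem_cons_of_mem a ht))
      simp only [List.map_cons, List.sum_cons] at *
      omega
termination_by T => sizeOf T
decreasing_by have := List.sizeOf_lt_of_mem ht; simp_wf; omega

theorem ci_le_cv : ∀ (e : Bool) (T : PlaneTree),
    countInternal e T ≤ countVert e T
  | e, node ts => by
    rw [countVert_node, countInternal_node]
    have h : ∀ t ∈ ts, countInternal (!e) t ≤ countVert (!e) t :=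
      fun t ht => ci_le_cv (!e) t
    have h2 : (ts.map (countInternal (!e))).sum ≤ (ts.map (countVert (!e))).sum := by
      induction ts with
      | nil => simp
      | cons a as ih =>
        have ha := h a (by simp)
        have := ih (fun t ht => h t (List.mem_cons_of_mem a ht))
        simp only [List.map_cons, List.sum_cons]
        omega
    have h3 : (if e ∧ ts ≠ [] then 1 else 0) ≤ (if e then (1:ℕ) else 0) := by
      by_cases he : e <;> by_cases hts : ts = [] <;> simp [he, hts]
    omega
termination_by e T => sizeOf T
decreasing_by have := List.sizeOf_lt_of_mem ht; simp_wf; omega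

/-- Trees with at most `n` edges form a finite set. -/
theorem finite_numEdges_le : ∀ n : ℕ, {T : PlaneTree | numEdges T ≤ n}.Finite := by
  intro n
  induction n with
  | zero =>
    apply Set.Finite.subset (Set.finite_singleton (node []))
    rintro ⟨ts⟩ hT
    simp only [Set.mem_setOf_eq, numEdges_node, Nat.le_zero] at hT
    cases ts with
    | nil => rfl
    | cons a as => simp at hT
  | succ n ih =>
    classical
    haveI : Finite {T : PlaneTree // numEdges T ≤ n} := ih.to_subtype
    have hlist : {l : List {T : PlaneTree // numEdges T ≤ n} | l.length ≤ n + 1}.Finite :=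
      List.finite_length_le _ (n+1)
    have himg : ((fun l : List {T : PlaneTree // numEdges T ≤ n} =>
        node (l.map Subtype.val)) '' {l | l.length ≤ n + 1}).Finite := hlist.image _
    apply Set.Finite.subset himg
    rintro ⟨ts⟩ hT
    simp only [Set.mem_setOf_eq, numEdges_node] at hT
    have hmem : ∀ t ∈ ts, numEdges t ≤ n := by
      intro t ht
      have : numEdges t + 1 ≤ (ts.map (fun t => numEdges t + 1)).sum :=
        List.single_le_sum (by simp) _ (List.mem_map_of_mem ht)
      omega
    have hlen : ts.length ≤ n + 1 := by
      calc ts.length = (ts.map (fun t => numEdges t + 1)).length := by simp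
      _ ≤ (ts.map (fun t => numEdges t + 1)).sum := by
          apply List.length_le_sum_of_one_le
          intro i hi
          simp only [List.mem_map] at hi
          obtain ⟨t, _, rfl⟩ := hi
          omega
      _ ≤ n + 1 := hT
    refine ⟨ts.attach.map (fun t => ⟨t.1, hmem t.1 t.2⟩), ?_, ?_⟩
    · simp [Set.mem_setOf_eq, hlen]
    · simp only [List.map_map]
      simp

theorem cv_false_node (ts : List PlaneTree) :
    countVert false (node ts) = (ts.map (countVert true)).sum := by
  rw [countVert_node]; simp

theorem cv_true_node (ts : List PlaneTree) :
    countVert true (node ts) = 1 + (ts.map (countVert false)).sum := by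
  rw [countVert_node]; simp

theorem ci_false_node (ts : List PlaneTree) :
    countInternal false (node ts) = (ts.map (countInternal true)).sum := by
  rw [countInternal_node]; simp

theorem ci_true_node (ts : List PlaneTree) :
    countInternal true (node ts) =
      (if ts = [] then 0 else 1) + (ts.map (countInternal false)).sum := by
  rw [countInternal_node]
  by_cases h : ts = [] <;> simp [h]

/-- The closed-form counting function. -/
def A : ℕ → ℕ → ℕ
  | 0, _ => 0
  | _+1, 0 => 0
  | i+1, j+1 => catalan j * (i+j).choose (2*j)

@[simp] theorem A_zero_left (l : ℕ) : A 0 l = 0 := rfl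

@[simp] theorem A_zero_right (m : ℕ) : A m 0 = 0 := by cases m <;> rfl

theorem A_succ (i j : ℕ) : A (i+1) (j+1) = catalan j * (i+j).choose (2*j) := rfl

/-- The set of plane trees with `m` odd-level vertices, `l` even-level vertices,
all even-level vertices internal. -/
def S (m l : ℕ) : Set PlaneTree :=
  {T | countVert false T = m ∧ countVert true T = l ∧ countInternal true T = l}

theorem S_finite (m l : ℕ) : (S m l).Finite := by
  apply Set.Finite.subset (finite_numEdges_le (m + l))
  intro T hT
  obtain ⟨h1, h2, _⟩ := hT
  have := cv_add T
  simp only [Set.mem_setOf_eq]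
  omega

/-- The finset of plane trees with `m` odd-level vertices, `l` even-level vertices,
all even-level internal. -/
noncomputable def SF (m l : ℕ) : Finset PlaneTree := (S_finite m l).toFinset

theorem mem_SF {m l : ℕ} {T : PlaneTree} :
    T ∈ SF m l ↔ countVert false T = m ∧ countVert true T = l ∧
      countInternal true T = l := by
  simp [SF, Set.Finite.mem_toFinset, S, Set.mem_setOf_eq]

theorem cv_cons (e : Bool) (c : PlaneTree) (ts : List PlaneTree) :
    countVert e (node (c :: ts)) = countVert (!e) c + countVert e (node ts) := by
  rw [countVert_node, countVert_node, List.map_cons, List.sum_cons]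
  cases e <;> simp <;> omega

theorem cv_graft (e : Bool) (u : PlaneTree) (us ts : List PlaneTree) :
    countVert e (node (node (u::us) :: ts)) =
      countVert e u + countVert e (node (node us :: ts)) := by
  simp only [cv_cons, Bool.not_not]
  omega

theorem ci_true_graft (u : PlaneTree) (us ts : List PlaneTree) :
    countInternal true (node (node (u::us) :: ts)) =
      countInternal true u + countInternal true (node (node us :: ts)) := by
  simp only [ci_true_node, ci_false_node, List.map_cons, List.sum_cons,
    List.cons_ne_nil, if_false]
  omega

theorem cv_false_addLf (ts : List PlaneTree) :
    countVert false (node (node [] :: ts)) = 1 + countVert false (node ts) := by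
  rw [cv_cons]
  simp [cv_true_node]

theorem cv_true_addLf (ts : List PlaneTree) :
    countVert true (node (node [] :: ts)) = countVert true (node ts) := by
  rw [cv_cons]
  simp [cv_false_node]

theorem ci_true_addLf (ts : List PlaneTree) (h : ts ≠ []) :
    countInternal true (node (node [] :: ts)) = countInternal true (node ts) := by
  simp only [ci_true_node, ci_false_node, List.map_cons, List.sum_cons,
    List.cons_ne_nil, if_false, h, if_neg]
  simp

theorem SF_zero_right (m : ℕ) : SF m 0 = ∅ := by
  ext T
  simp only [mem_SF, Finset.notMem_empty, iff_false]
  rintro ⟨-, h2, -⟩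
  obtain ⟨ts⟩ := T
  have := cv_true_pos ts
  omega

theorem SF_zero_left (l : ℕ) : SF 0 l = ∅ := by
  ext T
  simp only [mem_SF, Finset.notMem_empty, iff_false]
  rintro ⟨h1, h2, h3⟩
  obtain ⟨ts⟩ := T
  cases ts with
  | nil =>
    rw [cv_true_node] at h2
    rw [ci_true_node] at h3
    simp at h2 h3
    omega
  | cons c cs =>
    rw [cv_cons] at h1
    obtain ⟨ds⟩ := c
    have := cv_true_pos ds
    simp only [Bool.not_false] at h1
    omega

theorem SF_one_one : SF 1 1 = {node [node []]} := by
  ext T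
  simp only [mem_SF, Finset.mem_singleton]
  constructor
  · rintro ⟨h1, h2, h3⟩
    obtain ⟨ts⟩ := T
    cases ts with
    | nil =>
      rw [ci_true_node] at h3; simp at h3
    | cons c cs =>
      rw [cv_cons] at h1
      rw [cv_cons] at h2
      simp only [Bool.not_false, Bool.not_true] at h1 h2
      obtain ⟨ds⟩ := c
      have hc := cv_true_pos ds
      cases cs with
      | cons c2 cs2 =>
        rw [cv_cons] at h1
        obtain ⟨ds2⟩ := c2
        have := cv_true_pos ds2
        simp only [Bool.not_false] at h1
        omega
      | nil =>
        cases ds with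
        | nil => rfl
        | cons d ds' =>
          exfalso
          have h4 : countVert true (node ([] : List PlaneTree)) = 1 := by
            rw [cv_true_node]; simp
          rw [cv_cons] at h2
          obtain ⟨es⟩ := d
          have := cv_true_pos es
          simp only [Bool.not_false] at h2
          omega
  · rintro rfl
    refine ⟨?_, ?_, ?_⟩
    · rw [cv_false_node]; simp [cv_true_node]
    · rw [cv_true_node]; simp [cv_false_node]
    · rw [ci_true_node]; simp [ci_false_node]

/-- Add a new leftmost leaf-child to the root. -/
def addLf : PlaneTree → PlaneTree
  | node ts => node (node [] :: ts)

/-- Graft a tree as the new leftmost child of the leftmost child of the root. -/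
def graft : PlaneTree → PlaneTree → PlaneTree
  | u, node (node us :: ts) => node (node (u :: us) :: ts)
  | _, t => t

theorem graft_eq (u : PlaneTree) (us ts : List PlaneTree) :
    graft u (node (node us :: ts)) = node (node (u :: us) :: ts) := rfl

theorem addLf_injective : Function.Injective addLf := by
  rintro ⟨ts⟩ ⟨ts'⟩ h
  simp only [addLf, node.injEq, List.cons.injEq] at h
  rw [h.2]

theorem root_ne_nil {m l : ℕ} {ts : List PlaneTree} (h : node ts ∈ SF m l) :
    ts ≠ [] := by
  obtain ⟨h1, h2, h3⟩ := mem_SF.mp h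
  rintro rfl
  rw [cv_true_node] at h2
  rw [ci_true_node] at h3
  simp at h2 h3
  omega

theorem graft_shape {m2 l2 : ℕ} {T' : PlaneTree} (u : PlaneTree)
    (hT' : T' ∈ SF m2 l2) :
    ∃ us ts, T' = node (node us :: ts) ∧ graft u T' = node (node (u :: us) :: ts) := by
  obtain ⟨ts'⟩ := T'
  have hne := root_ne_nil hT'
  cases ts' with
  | nil => exact absurd rfl hne
  | cons c cs =>
    obtain ⟨us⟩ := c
    exact ⟨us, cs, rfl, rfl⟩

theorem SF_decomp (m l : ℕ) (h : ¬(m = 0 ∧ l = 0)) :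
    SF (m+1) (l+1) = (SF m (l+1)).image addLf ∪
      ((Finset.range (m+2) ×ˢ Finset.range (l+2)).biUnion fun p =>
        ((SF p.1 p.2 ×ˢ SF (m+1-p.1) (l+1-p.2)).image fun q => graft q.1 q.2)) := by
  ext T
  simp only [Finset.mem_union, Finset.mem_image, Finset.mem_biUnion, Finset.mem_product,
    Finset.mem_range]
  constructor
  · intro hT
    obtain ⟨h1, h2, h3⟩ := mem_SF.mp hT
    obtain ⟨ts⟩ := T
    have hne : ts ≠ [] := root_ne_nil hT
    cases ts with
    | nil => exact absurd rfl hne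
    | cons c cs =>
      obtain ⟨ds⟩ := c
      cases ds with
      | nil =>
        cases cs with
        | nil =>
          exfalso
          have e1 : countVert false (node [node ([]:List PlaneTree)]) = 1 := by
            rw [cv_false_node]; simp [cv_true_node]
          have e2 : countVert true (node [node ([]:List PlaneTree)]) = 1 := by
            rw [cv_true_node]; simp [cv_false_node]
          rw [e1] at h1; rw [e2] at h2
          exact h ⟨by omega, by omega⟩
        | cons c2 cs2 =>
          left
          refine ⟨node (c2 :: cs2), mem_SF.mpr ⟨?_, ?_, ?_⟩, rfl⟩
          · have := cv_false_addLf (c2 :: cs2); omega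
          · have := cv_true_addLf (c2 :: cs2); omega
          · have := ci_true_addLf (c2 :: cs2) (by simp)
            rw [← this]; exact h3
      | cons u us =>
        right
        have g1 := cv_graft false u us cs
        have g2 := cv_graft true u us cs
        have g3 := ci_true_graft u us cs
        have hle1 := ci_le_cv true u
        have hle2 := ci_le_cv true (node (node us :: cs))
        have hmu : u ∈ SF (countVert false u) (countVert true u) :=
          mem_SF.mpr ⟨rfl, rfl, by omega⟩
        have hmT : node (node us :: cs) ∈
            SF (m+1-countVert false u) (l+1-countVert true u) :=
          mem_SF.mpr ⟨by omega, by omega, by omega⟩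
        exact ⟨(countVert false u, countVert true u), ⟨by omega, by omega⟩,
          (u, node (node us :: cs)), ⟨hmu, hmT⟩, rfl⟩
  · rintro (⟨U, hU, rfl⟩ | ⟨p, ⟨hp1, hp2⟩, ⟨u, T'⟩, ⟨hu, hT'⟩, rfl⟩)
    · obtain ⟨ts⟩ := U
      have hne := root_ne_nil hU
      obtain ⟨h1, h2, h3⟩ := mem_SF.mp hU
      refine mem_SF.mpr ⟨?_, ?_, ?_⟩
      · show countVert false (node (node [] :: ts)) = m + 1
        rw [cv_false_addLf]; omega
      · show countVert true (node (node [] :: ts)) = l + 1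
        rw [cv_true_addLf]; omega
      · show countInternal true (node (node [] :: ts)) = l + 1
        rw [ci_true_addLf ts hne]; omega
    · obtain ⟨us, ts, rfl, heq⟩ := graft_shape u hT'
      rw [heq]
      obtain ⟨h1, h2, h3⟩ := mem_SF.mp hu
      obtain ⟨h4, h5, h6⟩ := mem_SF.mp hT'
      dsimp only at h1 h2 h3 h4 h5 h6
      have g1 := cv_graft false u us ts
      have g2 := cv_graft true u us ts
      have g3 := ci_true_graft u us ts
      refine mem_SF.mpr ⟨by omega, by omega, by omega⟩

theorem SF_card_rec (m l : ℕ) (h : ¬(m = 0 ∧ l = 0)) :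
    (SF (m+1) (l+1)).card = (SF m (l+1)).card +
      ∑ p ∈ Finset.range (m+2) ×ˢ Finset.range (l+2),
        (SF p.1 p.2).card * (SF (m+1-p.1) (l+1-p.2)).card := by
  rw [SF_decomp m l h]
  rw [Finset.card_union_of_disjoint]
  · congr 1
    · exact Finset.card_image_of_injective _ addLf_injective
    · rw [Finset.card_biUnion]
      · apply Finset.sum_congr rfl
        intro p _
        rw [Finset.card_image_of_injOn, Finset.card_product]
        rintro ⟨u, T'⟩ hq ⟨v, T''⟩ hq' heq
        simp only [Finset.mem_coe, Finset.mem_product] at hq hq'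
        obtain ⟨us, ts, rfl, e1⟩ := graft_shape u hq.2
        obtain ⟨vs, ts', rfl, e2⟩ := graft_shape v hq'.2
        dsimp only at heq
        rw [e1, e2] at heq
        simp only [node.injEq, List.cons.injEq] at heq
        obtain ⟨⟨rfl, rfl⟩, rfl⟩ := heq
        rfl
      · intro p hp q hq hpq
        simp only [Finset.disjoint_left, Finset.mem_image, Finset.mem_product]
        rintro T ⟨⟨u, T'⟩, ⟨hu, hT'⟩, rfl⟩ ⟨⟨v, T''⟩, ⟨hv, hT''⟩, heq⟩
        obtain ⟨us, ts, rfl, e1⟩ := graft_shape u hT'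
        obtain ⟨vs, ts', rfl, e2⟩ := graft_shape v hT''
        dsimp only at heq
        rw [e1] at heq; rw [e2] at heq
        simp only [node.injEq, List.cons.injEq] at heq
        obtain ⟨⟨rfl, -⟩, -⟩ := heq
        obtain ⟨a1, a2, -⟩ := mem_SF.mp hu
        obtain ⟨b1, b2, -⟩ := mem_SF.mp hv
        exact hpq (Prod.ext (a1 ▸ b1.symm ▸ rfl) (a2 ▸ b2.symm ▸ rfl))
  · simp only [Finset.disjoint_left, Finset.mem_image, Finset.mem_biUnion,
      Finset.mem_product]
    rintro T ⟨U, hU, rfl⟩ ⟨p, -, ⟨u, T'⟩, ⟨-, hT'⟩, heq⟩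
    obtain ⟨us, ts, rfl, e1⟩ := graft_shape u hT'
    obtain ⟨ws⟩ := U
    dsimp only at heq
    rw [e1] at heq
    simp [addLf] at heq

theorem hockey (s a : ℕ) :
    ∑ k ∈ Finset.range (s+1), k.choose a = (s+1).choose (a+1) := by
  rcases le_or_gt a s with hle | hlt
  · rw [← Nat.sum_Icc_choose s a]
    symm
    apply Finset.sum_subset
    · intro x hx
      rw [Finset.mem_Icc] at hx
      rw [Finset.mem_range]
      omega
    · intro x hx hnx
      rw [Finset.mem_range] at hx
      rw [Finset.mem_Icc] at hnx
      exact Nat.choose_eq_zero_of_lt (by omega)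
  · rw [Nat.choose_eq_zero_of_lt (by omega)]
    apply Finset.sum_eq_zero
    intro k hk
    rw [Finset.mem_range] at hk
    exact Nat.choose_eq_zero_of_lt (by omega)

theorem vand : ∀ s a b : ℕ,
    ∑ k ∈ Finset.range (s+1), k.choose a * ((s-k).choose b) =
      (s+1).choose (a+b+1) := by
  intro s
  induction s with
  | zero =>
    intro a b
    cases b with
    | zero => simpa using (hockey 0 a)
    | succ b =>
      rw [Nat.choose_eq_zero_of_lt (by omega)]
      apply Finset.sum_eq_zero
      intro k hk
      rw [Finset.mem_range] at hk
      have hk0 : k = 0 := by omega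
      subst hk0
      simp
  | succ s ih =>
    intro a b
    cases b with
    | zero =>
      simp only [Nat.choose_zero_right, mul_one, Nat.add_zero]
      exact hockey (s+1) a
    | succ b =>
      rw [Finset.sum_range_succ, Nat.sub_self]
      simp only [Nat.choose_zero_succ, mul_zero, add_zero]
      have step : ∀ k ∈ Finset.range (s+1),
          k.choose a * ((s+1-k).choose (b+1)) =
            k.choose a * ((s-k).choose b) + k.choose a * ((s-k).choose (b+1)) := by
        intro k hk
        rw [Finset.mem_range] at hk
        have e : s+1-k = (s-k)+1 := by omega
        rw [e, Nat.choose_succ_succ, Nat.mul_add]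
      rw [Finset.sum_congr rfl step, Finset.sum_add_distrib, ih a b, ih a (b+1)]
      have e1 : a + (b+1) + 1 = (a+b+1) + 1 := by omega
      rw [e1, Nat.choose_succ_succ (s+1) (a+b+1)]

theorem inner_conv (M j j' : ℕ) :
    ∑ i ∈ Finset.range (M+1), (i+j).choose (2*j) * ((M-i+j').choose (2*j')) =
      (M+j+j'+1).choose (2*j+2*j'+1) := by
  have h1 : ∑ i ∈ Finset.range (M+1),
      (i+j).choose (2*j) * ((M-i+j').choose (2*j')) =
      ∑ k ∈ Finset.Ico j (M+j+1), k.choose (2*j) * ((M+j+j'-k).choose (2*j')) := by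
    rw [Finset.sum_Ico_eq_sum_range]
    have e : M+j+1-j = M+1 := by omega
    rw [e]
    apply Finset.sum_congr rfl
    intro i hi
    rw [Finset.mem_range] at hi
    have e1 : j + i = i + j := by omega
    have e2 : M+j+j'-(i+j) = M-i+j' := by omega
    rw [e1, e2]
  rw [h1]
  have h2 : ∑ k ∈ Finset.Ico j (M+j+1), k.choose (2*j) * ((M+j+j'-k).choose (2*j')) =
      ∑ k ∈ Finset.range (M+j+j'+1), k.choose (2*j) * ((M+j+j'-k).choose (2*j')) := by
    apply Finset.sum_subset
    · intro x hx
      rw [Finset.mem_Ico] at hx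
      rw [Finset.mem_range]
      omega
    · intro x hx hnx
      rw [Finset.mem_range] at hx
      rw [Finset.mem_Ico] at hnx
      rcases lt_or_ge x j with hxj | hxj
      · rw [Nat.choose_eq_zero_of_lt (by omega), Nat.zero_mul]
      · have hxM : M + j + 1 ≤ x := by omega
        rw [Nat.choose_eq_zero_of_lt (show M+j+j'-x < 2*j' by omega), Nat.mul_zero]
  rw [h2]
  exact vand (M+j+j') (2*j) (2*j')

theorem A_rec (m l : ℕ) (h : ¬(m = 0 ∧ l = 0)) :
    A (m+1) (l+1) = A m (l+1) +
      ∑ p ∈ Finset.range (m+2) ×ˢ Finset.range (l+2),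
        A p.1 p.2 * A (m+1-p.1) (l+1-p.2) := by
  have inner_trim : ∀ x : ℕ,
      ∑ l1 ∈ Finset.range (l+2), A x l1 * A (m+1-x) (l+1-l1) =
        ∑ j ∈ Finset.range l, A x (j+1) * A (m+1-x) (l-j) := by
    intro x
    rw [Finset.sum_range_succ', Finset.sum_range_succ]
    simp [Nat.succ_sub_succ, Nat.sub_self]
  have hsum : ∑ p ∈ Finset.range (m+2) ×ˢ Finset.range (l+2),
      A p.1 p.2 * A (m+1-p.1) (l+1-p.2) =
      ∑ i ∈ Finset.range m, ∑ j ∈ Finset.range l,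
        A (i+1) (j+1) * A (m-i) (l-j) := by
    rw [Finset.sum_product]
    rw [Finset.sum_congr rfl (fun x _ => inner_trim x)]
    rw [Finset.sum_range_succ', Finset.sum_range_succ]
    simp [Nat.succ_sub_succ, Nat.sub_self]
  rw [hsum]
  rcases Nat.eq_zero_or_pos l with rfl | hl
  · obtain ⟨m', rfl⟩ : ∃ m', m = m'+1 := ⟨m-1, by omega⟩
    simp [A_succ, catalan_zero]
  rcases Nat.eq_zero_or_pos m with rfl | hm
  · simp only [Finset.range_zero, Finset.sum_empty, A_zero_left, add_zero]
    rw [A_succ]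
    rw [Nat.choose_eq_zero_of_lt (by omega), Nat.mul_zero]
  obtain ⟨m', rfl⟩ : ∃ m', m = m'+1 := ⟨m-1, by omega⟩
  obtain ⟨l', rfl⟩ : ∃ l', l = l'+1 := ⟨l-1, by omega⟩
  rw [Finset.sum_comm]
  have hin : ∀ j ∈ Finset.range (l'+1),
      ∑ i ∈ Finset.range (m'+1), A (i+1) (j+1) * A (m'+1-i) (l'+1-j) =
        catalan j * catalan (l'-j) * ((m'+l'+1).choose (2*l'+1)) := by
    intro j hj
    rw [Finset.mem_range] at hj
    have e : ∀ i ∈ Finset.range (m'+1),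
        A (i+1) (j+1) * A (m'+1-i) (l'+1-j) =
          catalan j * catalan (l'-j) *
            ((i+j).choose (2*j) * ((m'-i+(l'-j)).choose (2*(l'-j)))) := by
      intro i hi
      rw [Finset.mem_range] at hi
      have e1 : m'+1-i = (m'-i)+1 := by omega
      have e2 : l'+1-j = (l'-j)+1 := by omega
      rw [e1, e2, A_succ, A_succ]
      ring
    rw [Finset.sum_congr rfl e, ← Finset.mul_sum]
    rw [inner_conv m' j (l'-j)]
    congr 2
    · omega
    · omega
  rw [Finset.sum_congr rfl hin, ← Finset.sum_mul]
  have hcat : ∑ j ∈ Finset.range (l'+1), catalan j * catalan (l'-j) =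
      catalan (l'+1) := by
    rw [catalan_succ l']
    exact (Fin.sum_univ_eq_sum_range (fun i => catalan i * catalan (l'-i)) (l'+1)).symm
  rw [hcat]
  rw [A_succ, A_succ]
  have e3 : m'+1+(l'+1) = (m'+l'+1)+1 := by omega
  have e4 : 2*(l'+1) = (2*l'+1)+1 := by omega
  rw [e3, e4, Nat.choose_succ_succ (m'+l'+1) (2*l'+1)]
  have e5 : m'+(l'+1) = m'+l'+1 := by omega
  rw [e5]
  ring

theorem card_SF (m l : ℕ) : (SF m l).card = A m l := by
  suffices H : ∀ n m l : ℕ, m + l ≤ n → (SF m l).card = A m l from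
    H (m+l) m l le_rfl
  intro n
  induction n with
  | zero =>
    intro m l hml
    obtain rfl : m = 0 := by omega
    obtain rfl : l = 0 := by omega
    rw [SF_zero_left]
    simp
  | succ n ih =>
    intro m l hml
    cases m with
    | zero =>
      rw [SF_zero_left]; simp
    | succ m =>
      cases l with
      | zero =>
        rw [SF_zero_right]; simp
      | succ l =>
        by_cases h0 : m = 0 ∧ l = 0
        · obtain ⟨rfl, rfl⟩ := h0
          rw [SF_one_one]
          simp [A_succ]
        · rw [SF_card_rec m l h0, A_rec m l h0]
          congr 1
          · exact ih m (l+1) (by omega)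
          · apply Finset.sum_congr rfl
            intro p hp
            rw [Finset.mem_product, Finset.mem_range, Finset.mem_range] at hp
            by_cases h1 : p.1 = 0
            · rw [h1, SF_zero_left]; simp
            by_cases h2 : p.2 = 0
            · rw [h2, SF_zero_right]; simp
            by_cases h3 : p.1 = m+1 ∧ p.2 = l+1
            · rw [h3.1, h3.2, Nat.sub_self, SF_zero_left]
              simp
            · have h4 : p.1 + p.2 ≤ m + l + 1 := by
                by_cases e : p.1 = m+1
                · have : p.2 ≠ l+1 := fun hc => h3 ⟨e, hc⟩
                  omega
                · omega
              rw [ih p.1 p.2 (by omega), ih (m+1-p.1) (l+1-p.2) (by omega)]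

theorem key_nat (b n : ℕ) :
    (n+1) * (catalan (n+1) * (b+n+1).choose (2*n+2)) =
      (b+n+1).choose n * ((b+1).choose (n+2)) := by
  rcases le_or_gt (n+1) b with hb | hb
  · apply Nat.eq_of_mul_eq_mul_left (show 0 < n+2 by omega)
    have hc : (n+2) * catalan (n+1) = (2*n+2).choose (n+1) := by
      have := succ_mul_catalan_eq_centralBinom (n+1)
      rw [this, Nat.centralBinom]
      congr 2
    have E1 : (b+n+1).choose (2*n+2) * (2*n+2).choose (n+1) =
        (b+n+1).choose (n+1) * b.choose (n+1) := by
      have := Nat.choose_mul (n := b+n+1) (show n+1 ≤ 2*n+2 by omega)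
      rw [this]
      congr 2 <;> omega
    have E2 : (b+n+1).choose (n+1) * (n+1) = (b+n+1).choose n * (b+1) := by
      have := Nat.choose_succ_right_eq (b+n+1) n
      rw [this]
      congr 1
      omega
    have E3 : (b+1) * b.choose (n+1) = (b+1).choose (n+2) * (n+2) :=
      Nat.add_one_mul_choose_eq b (n+1)
    zify at hc E1 E2 E3 ⊢
    linear_combination ((n:ℤ)+1) * ((b+n+1).choose (2*n+2) : ℤ) * hc +
      ((n:ℤ)+1) * E1 + ((b.choose (n+1) : ℕ) : ℤ) * E2 + ((b+n+1).choose n : ℤ) * E3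
  · rw [Nat.choose_eq_zero_of_lt (show b+n+1 < 2*n+2 by omega),
      Nat.choose_eq_zero_of_lt (show b+1 < n+2 by omega)]
    simp

theorem binom_natCast (x y : ℕ) : binom (x : ℤ) (y : ℤ) = (x.choose y : ℤ) := by
  unfold binom
  by_cases h : (0:ℤ) ≤ (y:ℤ) ∧ (y:ℤ) ≤ (x:ℤ)
  · rw [if_pos h]
    simp
  · rw [if_neg h]
    have hxy : x < y := by
      by_contra hc
      exact h ⟨Int.natCast_nonneg y, by exact_mod_cast not_lt.mp hc⟩
    rw [Nat.choose_eq_zero_of_lt hxy]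
    simp

theorem theorem_set_eq (b l : ℕ) :
    {T : PlaneTree | T.numEdges = b + l ∧ PlaneTree.countVert false T = b + 1 ∧
        PlaneTree.countVert true T = l ∧ PlaneTree.countInternal true T = l} =
      S (b+1) l := by
  ext T
  simp only [Set.mem_setOf_eq, S]
  have := cv_add T
  constructor
  · rintro ⟨-, h2, h3, h4⟩
    exact ⟨h2, h3, h4⟩
  · rintro ⟨h2, h3, h4⟩
    exact ⟨by omega, h2, h3, h4⟩

theorem ncard_eq (b l : ℕ) :
    {T : PlaneTree | T.numEdges = b + l ∧ PlaneTree.countVert false T = b + 1 ∧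
        PlaneTree.countVert true T = l ∧ PlaneTree.countInternal true T = l}.ncard =
      A (b+1) l := by
  rw [theorem_set_eq b l, ← card_SF (b+1) l]
  rw [Set.ncard_eq_toFinset_card _ (S_finite (b+1) l)]
  rfl

end AuxPT

/-- The number of plane trees with `b+l` edges having exactly `b+1`
odd-level vertices and exactly `l` even-level vertices, all of which are internal. -/
theorem planeTrees_allEvenInternal_count (b l : ℕ) :
    (1 < l →
      ({T : PlaneTree | T.numEdges = b + l ∧ PlaneTree.countVert false T = b + 1 ∧
          PlaneTree.countVert true T = l ∧ PlaneTree.countInternal true T = l}.ncard : ℚ) =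
        (1 / ((l : ℚ) - 1)) * (binom ((l : ℤ) + b - 1) ((l : ℤ) - 2) : ℚ) *
          (binom ((b : ℤ) + 1) (l : ℤ) : ℚ)) ∧
    (l = 1 →
      {T : PlaneTree | T.numEdges = b + l ∧ PlaneTree.countVert false T = b + 1 ∧
          PlaneTree.countVert true T = l ∧ PlaneTree.countInternal true T = l}.ncard = 1) := by
  constructor
  · intro hl
    obtain ⟨n, rfl⟩ : ∃ n, l = n+2 := ⟨l-2, by omega⟩
    rw [AuxPT.ncard_eq b (n+2), AuxPT.A_succ b (n+1)]
    have e1 : b+(n+1) = b+n+1 := by omega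
    have e2 : 2*(n+1) = 2*n+2 := by omega
    rw [e1, e2]
    have h1 : ((n+2:ℕ) : ℤ) + (b:ℤ) - 1 = ((b+n+1 : ℕ) : ℤ) := by push_cast; ring
    have h2 : ((n+2:ℕ) : ℤ) - 2 = ((n:ℕ) : ℤ) := by push_cast; ring
    have h3 : ((b:ℕ) : ℤ) + 1 = ((b+1 : ℕ) : ℤ) := by push_cast; ring
    rw [h1, h2, h3, AuxPT.binom_natCast, AuxPT.binom_natCast]
    have keyq : ((n:ℚ)+1) * ((catalan (n+1) : ℚ) * (((b+n+1).choose (2*n+2) : ℕ) : ℚ)) =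
        (((b+n+1).choose n : ℕ) : ℚ) * (((b+1).choose (n+2) : ℕ) : ℚ) := by
      exact_mod_cast AuxPT.key_nat b n
    have hq : ((n:ℚ)+1) ≠ 0 := by positivity
    have hcast : ((n+2:ℕ) : ℚ) - 1 = (n:ℚ)+1 := by push_cast; ring
    rw [hcast]
    push_cast
    field_simp
    linear_combination keyq
  · intro hl
    subst hl
    rw [AuxPT.ncard_eq b 1, AuxPT.A_succ b 0]
    simp
end

section
/- For all integers b ≥ 0 and k ≥ 1, the following identity holds: (1/(b+k))·C(b+k, k)·C(b+k, k−1) = C(b+k−1, k−1) + ∑_{l ≥ 2} (1/(l−1))·C(l+b−1, l−2)·C(b+1, l)·C(b+k−1, k−l), where the sum over l ≥ 2 has only finitely many nonzero terms (each summand vanishes once l > min(k, b+1)). -/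
open scoped BigOperators

attribute [local instance] Classical.propDecidable

/-- cast version of `Nat.choose_succ_right_eq`, valid unconditionally over ℚ. -/
lemma q1 (n m : ℕ) : (n.choose (m+1) : ℚ) * ((m:ℚ)+1) = (n.choose m : ℚ) * ((n:ℚ) - m) := by
  rcases lt_or_ge n m with h | h
  · rw [Nat.choose_eq_zero_of_lt (by omega), Nat.choose_eq_zero_of_lt h]
    ring
  · have h2 := Nat.choose_succ_right_eq n m
    have h3 : ((n.choose (m+1) * (m+1) : ℕ) : ℚ) = ((n.choose m * (n - m) : ℕ) : ℚ) := by
      exact_mod_cast congrArg (Nat.cast : ℕ → ℚ) h2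
    rw [Nat.cast_mul, Nat.cast_mul, Nat.cast_sub h] at h3
    push_cast at h3 ⊢
    linarith

/-- `C(n, m+1) * (m+1) = n * C(n-1, m)` over ℚ, for `n ≥ 1`. -/
lemma q2 (n m : ℕ) (hn : 1 ≤ n) :
    (n.choose (m+1) : ℚ) * ((m:ℚ)+1) = (n : ℚ) * ((n-1).choose m : ℚ) := by
  have h := Nat.add_one_mul_choose_eq (n-1) m
  rw [Nat.sub_add_cancel hn] at h
  have h2 := congrArg (Nat.cast : ℕ → ℚ) h
  push_cast at h2
  linarith

lemma sum_Icc_top (f : ℕ → ℚ) (k : ℕ) :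
    ∑ l ∈ Finset.Icc 1 (k+1), f l = (∑ l ∈ Finset.Icc 1 k, f l) + f (k+1) := by
  rw [← Finset.insert_Icc_right_eq_Icc_add_one (by omega : 1 ≤ k+1), Finset.sum_insert (by simp)]
  ring

lemma telescope (g : ℕ → ℚ) (k : ℕ) :
    ∑ l ∈ Finset.Icc 1 k, (g l - g (l+1)) = g 1 - g (k+1) := by
  induction k with
  | zero => simp
  | succ k ih =>
    rw [sum_Icc_top (fun l => g l - g (l+1)) k, ih]
    ring

lemma keyS (b k : ℕ) (hk : 1 ≤ k) :
    ∑ l ∈ Finset.Icc 1 k,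
      ((Nat.choose (b + l - 1) (l - 1) : ℚ) * (Nat.choose (b+1) l : ℚ) *
        (Nat.choose (b + k - 1) (k - l) : ℚ))
    = (Nat.choose (b+k) k : ℚ) * (Nat.choose (b+k-1) (k-1) : ℚ) := by
  induction k, hk using Nat.le_induction with
  | base => simp [Nat.choose_one_right]
  | succ k hk ih =>
    have hbk1 : b + (k+1) - 1 = b + k := by omega
    rw [hbk1]
    set g : ℕ → ℚ := fun l => (l : ℚ) * ((l:ℚ) - 1) * (Nat.choose (b + l - 1) (l - 1) : ℚ) *
      (Nat.choose (b+1) l : ℚ) * (Nat.choose (b+k) (k+1-l) : ℚ) with hg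
    have hnz : ((k:ℚ) * ((k:ℚ)+1)) ≠ 0 := by positivity
    apply mul_left_cancel₀ hnz
    have local_id : ∀ l ∈ Finset.Icc 1 k,
        (k:ℚ) * ((k:ℚ)+1) * ((Nat.choose (b + l - 1) (l - 1) : ℚ) * (Nat.choose (b+1) l : ℚ) *
          (Nat.choose (b+k) (k+1-l) : ℚ))
        = ((b:ℚ)+(k:ℚ)+1) * ((b:ℚ)+(k:ℚ)) * ((Nat.choose (b + l - 1) (l - 1) : ℚ) *
            (Nat.choose (b+1) l : ℚ) * (Nat.choose (b+k-1) (k-l) : ℚ))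
          + (g l - g (l+1)) := by
      intro l hl
      simp only [Finset.mem_Icc] at hl
      obtain ⟨hl1, hlk⟩ := hl
      simp only [hg]
      have e1 : b + (l+1) - 1 = b + l := by omega
      have e2 : (l+1) - 1 = l := by omega
      have e3 : k + 1 - (l+1) = k - l := by omega
      simp only [e1, e2, e3]
      have hckl : ((k - l : ℕ) : ℚ) = (k:ℚ) - (l:ℚ) := by rw [Nat.cast_sub hlk]
      have hcl1 : ((l - 1 : ℕ) : ℚ) = (l:ℚ) - 1 := by
        rw [Nat.cast_sub hl1]; push_cast; ring
      have hA : ((k:ℚ)+1-(l:ℚ)) * (Nat.choose (b+k) (k+1-l) : ℚ)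
          = ((b:ℚ)+(k:ℚ)) * (Nat.choose (b+k-1) (k-l) : ℚ) := by
        have h := q2 (b+k) (k-l) (by omega)
        rw [show k - l + 1 = k + 1 - l by omega, hckl] at h
        push_cast at h
        linear_combination h
      have hB : (l:ℚ) * (Nat.choose (b+l) l : ℚ)
          = ((b:ℚ)+(l:ℚ)) * (Nat.choose (b+l-1) (l-1) : ℚ) := by
        have h := q2 (b+l) (l-1) (by omega)
        rw [show l - 1 + 1 = l by omega, hcl1] at h
        push_cast at h
        linear_combination h
      have hC : (Nat.choose (b+1) (l+1) : ℚ) * ((l:ℚ)+1)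
          = (Nat.choose (b+1) l : ℚ) * ((b:ℚ)+1-(l:ℚ)) := by
        have h := q1 (b+1) l
        push_cast at h
        linear_combination h
      have hD : ((b:ℚ)+(l:ℚ)) * (Nat.choose (b+k) (k-l) : ℚ)
          = ((b:ℚ)+(k:ℚ)) * (Nat.choose (b+k-1) (k-l) : ℚ) := by
        have h1 := q2 (b+k) (k-l) (by omega)
        have h2 := q1 (b+k) (k-l)
        rw [hckl] at h1 h2
        push_cast at h1 h2
        linear_combination h1 - h2
      push_cast
      linear_combination
        ((k:ℚ)+(l:ℚ)) * (Nat.choose (b+l-1) (l-1) : ℚ) * (Nat.choose (b+1) l : ℚ) * hA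
        + ((l:ℚ)+1) * (Nat.choose (b+1) (l+1) : ℚ) * (Nat.choose (b+k) (k-l) : ℚ) * hB
        + ((b:ℚ)+(l:ℚ)) * (Nat.choose (b+l-1) (l-1) : ℚ) * (Nat.choose (b+k) (k-l) : ℚ) * hC
        + ((b:ℚ)+1-(l:ℚ)) * (Nat.choose (b+l-1) (l-1) : ℚ) * (Nat.choose (b+1) l : ℚ) * hD
    rw [sum_Icc_top (fun l => (Nat.choose (b + l - 1) (l - 1) : ℚ) * (Nat.choose (b+1) l : ℚ) *
          (Nat.choose (b+k) (k+1-l) : ℚ)) k]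
    rw [mul_add, Finset.mul_sum, Finset.sum_congr rfl local_id, Finset.sum_add_distrib,
      telescope g k, ← Finset.mul_sum, ih]
    have hg1 : g 1 = 0 := by simp [hg]
    have hgk : g (k+1) = ((k:ℚ)+1) * (k:ℚ) * (Nat.choose (b+k) k : ℚ) *
        (Nat.choose (b+1) (k+1) : ℚ) := by
      simp only [hg]
      rw [show b + (k+1) - 1 = b + k by omega, show (k+1) - 1 = k by omega,
        show k + 1 - (k+1) = 0 by omega, Nat.choose_zero_right]
      push_cast
      ring
    rw [hg1, hgk]
    rw [show b + (k+1) - 1 = b + k by omega, show (k+1) - 1 = k by omega,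
      show k + 1 - (k+1) = 0 by omega, show b + (k+1) = b + k + 1 by omega,
      Nat.choose_zero_right]
    have p1 : ((b:ℚ)+(k:ℚ)+1) * (Nat.choose (b+k) k : ℚ)
        = ((k:ℚ)+1) * (Nat.choose (b+k+1) (k+1) : ℚ) := by
      have h := q2 (b+k+1) k (by omega)
      rw [show b + k + 1 - 1 = b + k by omega] at h
      push_cast at h
      linear_combination -h
    have p2 : ((b:ℚ)+(k:ℚ)) * (Nat.choose (b+k-1) (k-1) : ℚ)
        = (k:ℚ) * (Nat.choose (b+k) k : ℚ) := by
      have h := q2 (b+k) (k-1) (by omega)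
      rw [show k - 1 + 1 = k by omega] at h
      have : ((k - 1 : ℕ) : ℚ) = (k:ℚ) - 1 := by rw [Nat.cast_sub hk]; push_cast; ring
      rw [this] at h
      push_cast at h
      linear_combination -h
    push_cast
    linear_combination ((b:ℚ)+(k:ℚ)) * (Nat.choose (b+k-1) (k-1) : ℚ) * p1
      + ((k:ℚ)+1) * (Nat.choose (b+k+1) (k+1) : ℚ) * p2


/-- An identity expressing the Narayana number as a sum; the terms for
`l > min(k, b+1)` vanish, so the sum is taken over `2 ≤ l ≤ k` (the factor
`C(b+1, l)` vanishes for `l > b+1`). -/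
theorem narayana_identity (b k : ℕ) (hk : 1 ≤ k) :
    (1 / ((b : ℚ) + k)) * (Nat.choose (b + k) k : ℚ) * (Nat.choose (b + k) (k - 1) : ℚ) =
      (Nat.choose (b + k - 1) (k - 1) : ℚ) +
        ∑ l ∈ Finset.Icc 2 k,
          (1 / ((l : ℚ) - 1)) * (Nat.choose (l + b - 1) (l - 2) : ℚ) *
            (Nat.choose (b + 1) l : ℚ) * (Nat.choose (b + k - 1) (k - l) : ℚ) := by
  have hS := keyS b k hk
  have hins : Finset.Icc 1 k = insert 1 (Finset.Icc 2 k) := by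
    ext x; simp only [Finset.mem_Icc, Finset.mem_insert]; omega
  rw [hins, Finset.sum_insert (by simp)] at hS
  have h1 : (Nat.choose (b + 1 - 1) (1 - 1) : ℚ) * (Nat.choose (b+1) 1 : ℚ) *
      (Nat.choose (b + k - 1) (k - 1) : ℚ)
      = ((b:ℚ)+1) * (Nat.choose (b+k-1) (k-1) : ℚ) := by
    simp only [Nat.add_sub_cancel, Nat.sub_self, Nat.choose_zero_right, Nat.choose_one_right,
      Nat.cast_one, one_mul]
    push_cast
    ring
  rw [h1] at hS
  have hterm : ∀ l ∈ Finset.Icc 2 k,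
      ((b:ℚ)+1) * ((1 / ((l : ℚ) - 1)) * (Nat.choose (l + b - 1) (l - 2) : ℚ) *
        (Nat.choose (b + 1) l : ℚ) * (Nat.choose (b + k - 1) (k - l) : ℚ))
      = (Nat.choose (b + l - 1) (l - 1) : ℚ) * (Nat.choose (b+1) l : ℚ) *
        (Nat.choose (b + k - 1) (k - l) : ℚ) := by
    intro l hl
    simp only [Finset.mem_Icc] at hl
    obtain ⟨hl2, hlk⟩ := hl
    have h := q1 (b + l - 1) (l - 2)
    rw [show l - 2 + 1 = l - 1 by omega] at h
    have hc1 : ((b + l - 1 : ℕ) : ℚ) = (b:ℚ) + (l:ℚ) - 1 := by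
      rw [show b + l - 1 = b + (l-1) by omega]
      push_cast [Nat.cast_sub (by omega : 1 ≤ l)]
      ring
    have hc2 : ((l - 2 : ℕ) : ℚ) = (l:ℚ) - 2 := by
      rw [Nat.cast_sub (by omega : 2 ≤ l)]; push_cast; ring
    rw [hc1, hc2] at h
    rw [show l + b - 1 = b + l - 1 by omega]
    have hlne : (l:ℚ) - 1 ≠ 0 := by
      have : (2:ℚ) ≤ (l:ℚ) := by exact_mod_cast hl2
      intro hcon; linarith
    have hrw : ((b:ℚ)+1) * ((1 / ((l : ℚ) - 1)) * (Nat.choose (b + l - 1) (l - 2) : ℚ) *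
        (Nat.choose (b + 1) l : ℚ) * (Nat.choose (b + k - 1) (k - l) : ℚ))
        = (((b:ℚ)+1) * (Nat.choose (b + l - 1) (l - 2) : ℚ) *
          (Nat.choose (b + 1) l : ℚ) * (Nat.choose (b + k - 1) (k - l) : ℚ)) / ((l:ℚ) - 1) := by
      ring
    rw [hrw, div_eq_iff hlne]
    linear_combination -((Nat.choose (b+1) l : ℚ) * (Nat.choose (b + k - 1) (k - l) : ℚ)) * h
  have hb1 : ((b:ℚ)+1) ≠ 0 := by positivity
  apply mul_left_cancel₀ hb1
  rw [mul_add, Finset.mul_sum, Finset.sum_congr rfl hterm, hS]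
  -- remaining : (b+1) * LHS = C(b+k,k) * C(b+k-1,k-1)
  have hbk : ((b:ℚ)+(k:ℚ)) ≠ 0 := by
    have : (1:ℚ) ≤ (k:ℚ) := by exact_mod_cast hk
    positivity
  have hq1 : (Nat.choose (b+k) k : ℚ) * (k:ℚ)
      = (Nat.choose (b+k) (k-1) : ℚ) * ((b:ℚ)+1) := by
    have h := q1 (b+k) (k-1)
    rw [show k - 1 + 1 = k by omega] at h
    have h2 : ((k - 1 : ℕ) : ℚ) = (k:ℚ) - 1 := by rw [Nat.cast_sub hk]; push_cast; ring
    rw [h2] at h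
    push_cast at h
    linear_combination h
  have hq2 : ((b:ℚ)+(k:ℚ)) * (Nat.choose (b+k-1) (k-1) : ℚ)
      = (k:ℚ) * (Nat.choose (b+k) k : ℚ) := by
    have h := q2 (b+k) (k-1) (by omega)
    rw [show k - 1 + 1 = k by omega] at h
    have h2 : ((k - 1 : ℕ) : ℚ) = (k:ℚ) - 1 := by rw [Nat.cast_sub hk]; push_cast; ring
    rw [h2] at h
    push_cast at h
    linear_combination -h
  have hrw : ((b:ℚ)+1) * (1 / ((b : ℚ) + k) * (Nat.choose (b + k) k : ℚ) *
      (Nat.choose (b + k) (k - 1) : ℚ))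
      = (((b:ℚ)+1) * (Nat.choose (b + k) k : ℚ) * (Nat.choose (b + k) (k - 1) : ℚ)) /
        ((b:ℚ) + k) := by
    ring
  rw [hrw, div_eq_iff hbk]
  linear_combination (-(Nat.choose (b+k) k : ℚ)) * hq1 + (-(Nat.choose (b+k) k : ℚ)) * hq2
end

section
/- For all integers s, l_e, l_o with 1 ≤ l_e ≤ s, 1 ≤ l_o ≤ s and l_e + l_o > s, the following identity holds: ∑_{y=0}^{l_e−1} C(l_e, y)·C(l_e−y, l_e+l_o−s)·C(l_o−1, l_e−y−1) = (l_e/(l_e+l_o−s))·C(l_o−1, l_e+l_o−s−1)·C(s−1, s−l_o). -/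
open scoped BigOperators

attribute [local instance] Classical.propDecidable

lemma choose_swap (n k j : ℕ) : n.choose k * (n - k).choose j = n.choose j * (n - j).choose k := by
  rcases le_or_gt k n with hk | hk
  · rcases le_or_gt j (n - k) with hj | hj
    · have h1 : k + j ≤ n := by omega
      have e1 := Nat.choose_mul (n := n) (Nat.le_add_right k j)
      have e2 := Nat.choose_mul (n := n) (Nat.le_add_left j k)
      simp only [Nat.add_sub_cancel_left, Nat.add_sub_cancel] at e1 e2
      rw [← e1, ← e2]
      congr 1
      rw [← Nat.choose_symm (Nat.le_add_right k j), Nat.add_sub_cancel_left]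
    · rw [Nat.choose_eq_zero_of_lt hj]
      rcases le_or_gt j n with hj2 | hj2
      · rw [Nat.choose_eq_zero_of_lt (show n - j < k by omega)]; ring
      · rw [Nat.choose_eq_zero_of_lt hj2]; ring
  · rw [Nat.choose_eq_zero_of_lt hk, Nat.choose_eq_zero_of_lt (show n - j < k by omega)]
    ring

lemma key_nat (s le lo : ℕ) (hle : 1 ≤ le) (hles : le ≤ s) (hlo : 1 ≤ lo)
    (hlos : lo ≤ s) (h : s < le + lo) :
    (le + lo - s) * ∑ y ∈ Finset.range le,
        le.choose y * (le - y).choose (le + lo - s) * (lo - 1).choose (le - y - 1) =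
      le * ((lo - 1).choose (le + lo - s - 1) * (s - 1).choose (le - (le + lo - s))) := by
  set d := le + lo - s with hd
  have hd1 : 1 ≤ d := by omega
  have hdle : d ≤ le := by omega
  have hdlo : d ≤ lo := by omega
  have step1 : ∀ y ∈ Finset.range le,
      le.choose y * (le - y).choose d * (lo - 1).choose (le - y - 1)
        = le.choose d * ((le - d).choose y * (lo - 1).choose (le - 1 - y)) := by
    intro y hy
    rw [choose_swap le y d]
    have : le - y - 1 = le - 1 - y := by omega
    rw [this]; ring
  rw [Finset.sum_congr rfl step1, ← Finset.mul_sum]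
  have vand : ∑ y ∈ Finset.range le, (le - d).choose y * (lo - 1).choose (le - 1 - y)
      = (s - 1).choose (le - 1) := by
    have := Nat.add_choose_eq (le - d) (lo - 1) (le - 1)
    rw [Finset.Nat.sum_antidiagonal_eq_sum_range_succ_mk] at this
    have hse : le - d + (lo - 1) = s - 1 := by omega
    rw [hse] at this
    rw [this]
    apply Finset.sum_congr
    · congr 1; omega
    · intro x hx; rfl
  rw [vand]
  -- now: d * (le.choose d * (s-1).choose (le-1)) = le * ((lo-1).choose (d-1) * (s-1).choose (le-d))
  have e1 : le * (le - 1).choose (d - 1) = le.choose d * d := by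
    have := Nat.add_one_mul_choose_eq (le - 1) (d - 1)
    have h1 : le - 1 + 1 = le := by omega
    have h2 : d - 1 + 1 = d := by omega
    rw [h1, h2] at this
    exact this
  have e2 : (s - 1).choose (le - 1) * (le - 1).choose (le - d)
      = (s - 1).choose (le - d) * (lo - 1).choose (d - 1) := by
    have := Nat.choose_mul (n := s - 1) (show le - d ≤ le - 1 by omega)
    rw [this]
    congr 2 <;> omega
  have e3 : (le - 1).choose (le - d) = (le - 1).choose (d - 1) := by
    rw [← Nat.choose_symm (show d - 1 ≤ le - 1 by omega)]
    congr 1; omega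
  rw [e3] at e2
  calc d * (le.choose d * (s - 1).choose (le - 1))
      = (le.choose d * d) * (s - 1).choose (le - 1) := by ring
    _ = le * ((le - 1).choose (d - 1) * (s - 1).choose (le - 1)) := by rw [← e1]; ring
    _ = le * ((s - 1).choose (le - 1) * (le - 1).choose (d - 1)) := by ring
    _ = _ := by rw [e2]; ring

/-- A binomial identity used in the enumeration of forests of small
trees (cf. Sprugnoli, eq. (6.14)). -/
theorem binomial_identity (s le lo : ℕ) (hle : 1 ≤ le) (hles : le ≤ s) (hlo : 1 ≤ lo)
    (hlos : lo ≤ s) (h : s < le + lo) :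
    ∑ y ∈ Finset.range le,
        (Nat.choose le y : ℚ) * (Nat.choose (le - y) (le + lo - s) : ℚ) *
          (Nat.choose (lo - 1) (le - y - 1) : ℚ) =
      ((le : ℚ) / ((le : ℚ) + lo - s)) * (Nat.choose (lo - 1) (le + lo - s - 1) : ℚ) *
        (Nat.choose (s - 1) (s - lo) : ℚ) := by
  have key := key_nat s le lo hle hles hlo hlos h
  have hq : ((le + lo - s : ℕ) : ℚ) = (le : ℚ) + lo - s := by
    have hs : s ≤ le + lo := by omega
    push_cast [hs]; ring
  have hne : (le : ℚ) + lo - s ≠ 0 := by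
    rw [← hq]
    exact_mod_cast (by omega : le + lo - s ≠ 0)
  have keyq : ((le + lo - s : ℕ) : ℚ) *
      ∑ y ∈ Finset.range le, (Nat.choose le y : ℚ) * (Nat.choose (le - y) (le + lo - s) : ℚ) *
        (Nat.choose (lo - 1) (le - y - 1) : ℚ)
      = (le : ℚ) * ((Nat.choose (lo - 1) (le + lo - s - 1) : ℚ) *
        (Nat.choose (s - 1) (le - (le + lo - s)) : ℚ)) := by
    exact_mod_cast congrArg (fun n : ℕ => (n : ℚ)) key
  have hslo : s - lo = le - (le + lo - s) := by omega
  rw [hslo, div_mul_eq_mul_div, div_mul_eq_mul_div, eq_div_iff hne, ← hq]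
  linear_combination keyq
end
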